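/- Let n ≥ 2 be an integer and let (α_i^μ), indexed by pairs of integers with 1 ≤ μ ≤ i ≤ n−1, be a family of real numbers that is algebraically independent over ℚ. For each i = 1, …, n−1 define a_i ∈ ℝ^{n−1} to be the vector whose μ-th coordinate equals α_i^μ for μ ≤ i and equals 0 for μ > i. Then the convex hull of {a_1, …, a_{n−1}} in ℝ^{n−1} contains no rational point, i.e. no point all of whose coordinates lie in ℚ. -/

import Mathlib

open Matrix MvPolynomial Finset

/-- A product of variables equals the monomial with the summed exponents. -/
lemma prod_X_eq_monomial' {σ R : Type*} [CommSemiring R] {κ : Type*} (t : Finset κ)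
    (f : κ → σ) :
    (∏ i ∈ t, (X (f i) : MvPolynomial σ R)) =
      monomial (∑ i ∈ t, Finsupp.single (f i) 1) (1 : R) := by
  classical
  induction t using Finset.induction_on with
  | empty => simp
  | insert a s hnot ih =>
    rw [Finset.prod_insert hnot, Finset.sum_insert hnot, ih, X,
      monomial_mul, one_mul]

/-- Perturbation lemma core: if the triangular family of coordinates `α` is
algebraically independent over `ℚ`, then the convex hull of the points
`a_1, …, a_{n-1}` contains no rational point. -/
theorem stmt0 (n : ℕ) (hn : 2 ≤ n)
    (α : {p : Fin (n - 1) × Fin (n - 1) // p.2 ≤ p.1} → ℝ)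
    (hα : AlgebraicIndependent ℚ α)
    (a : Fin (n - 1) → Fin (n - 1) → ℝ)
    (ha : ∀ (i μ : Fin (n - 1)), a i μ = if h : μ ≤ i then α ⟨(i, μ), h⟩ else 0) :
    ∀ x ∈ convexHull ℝ (Set.range a), ¬ (∀ μ : Fin (n - 1), ∃ q : ℚ, x μ = (q : ℝ)) := by
  classical
  intro x hx hrat
  choose r hr using hrat
  rw [convexHull_range_eq_exists_affineCombination] at hx
  obtain ⟨s, w, hw0, hw1, hwx⟩ := hx
  rw [affineCombination_eq_centerMass hw1, Finset.centerMass_eq_of_sum_1 _ _ hw1] at hwx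
  -- extend the weights to all indices
  set lam0 : Fin (n - 1) → ℝ := fun i => if i ∈ s then w i else 0 with hlam0
  have hsum1 : ∑ i, lam0 i = 1 := by
    rw [hlam0]; rw [Finset.sum_ite_mem, Finset.univ_inter, hw1]
  have hxcoord : ∀ μ, x μ = ∑ i, lam0 i * a i μ := by
    intro μ
    have h := congrFun hwx μ
    rw [← h]
    simp only [Finset.sum_apply, Pi.smul_apply, smul_eq_mul, hlam0]
    have he : ∀ i, (if i ∈ s then w i else 0) * a i μ = if i ∈ s then w i * a i μ else 0 := by
      intro i; split <;> simp
    rw [Finset.sum_congr rfl (fun i _ => he i), Finset.sum_ite_mem, Finset.univ_inter]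
  -- the support of the weights
  set S : Finset (Fin (n - 1)) := Finset.univ.filter (fun i => lam0 i ≠ 0) with hSdef
  have hS1 : ∑ i ∈ S, lam0 i = 1 := by
    rw [hSdef, Finset.sum_filter_ne_zero, hsum1]
  have hxS : ∀ μ, x μ = ∑ i ∈ S, lam0 i * a i μ := by
    intro μ
    rw [hxcoord μ, ← Finset.sum_filter_of_ne (p := fun i => lam0 i ≠ 0)]
    intro i _ h hc
    exact h (by rw [hc, zero_mul])
  have hSne : S.Nonempty := by
    by_contra h
    rw [Finset.not_nonempty_iff_eq_empty] at h
    rw [h, Finset.sum_empty] at hS1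
    exact zero_ne_one hS1
  -- the square system over the support
  set M : Matrix ↥S ↥S ℝ := Matrix.of (fun i μ => a i μ) with hMdef
  set lam : ↥S → ℝ := fun i => lam0 i with hlamdef
  set q : ↥S → ℝ := fun μ => x μ with hqdef
  have hMv : Mᵀ *ᵥ lam = q := by
    funext μ
    simp only [Matrix.mulVec, dotProduct, Matrix.transpose_apply, hMdef, Matrix.of_apply,
      hlamdef, hqdef]
    rw [hxS μ, ← Finset.sum_attach S (fun i => lam0 i * a i μ)]
    exact Finset.sum_congr rfl (fun i _ => mul_comm _ _)
  have hcramer : Matrix.cramer Mᵀ q = Mᵀ.det • lam := by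
    rw [← hMv, Matrix.cramer_eq_adjugate_mulVec, Matrix.mulVec_mulVec, Matrix.adjugate_mul,
      Matrix.smul_mulVec, Matrix.one_mulVec]
  have hlamsum : ∑ i : ↥S, lam i = 1 := by
    rw [hlamdef, ← hS1]
    exact Finset.sum_coe_sort S lam0
  have hdet : ∑ i : ↥S, (Mᵀ.updateCol i q).det = Mᵀ.det := by
    calc ∑ i : ↥S, (Mᵀ.updateCol i q).det
        = ∑ i : ↥S, Matrix.cramer Mᵀ q i := by
          exact Finset.sum_congr rfl (fun i _ => (Matrix.cramer_apply _ _ _).symm)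
      _ = ∑ i : ↥S, Mᵀ.det * lam i := by rw [hcramer]; rfl
      _ = Mᵀ.det * ∑ i : ↥S, lam i := by rw [Finset.mul_sum]
      _ = Mᵀ.det := by rw [hlamsum, mul_one]
  -- the polynomial counterpart
  set P : Matrix ↥S ↥S (MvPolynomial {p : Fin (n - 1) × Fin (n - 1) // p.2 ≤ p.1} ℚ) :=
    Matrix.of (fun i μ : ↥S => if h : (μ : Fin (n - 1)) ≤ (i : Fin (n - 1)) then
      (X ⟨((i : Fin (n - 1)), (μ : Fin (n - 1))), h⟩ : MvPolynomial {p : Fin (n - 1) × Fin (n - 1) // p.2 ≤ p.1} ℚ) else 0) with hPdef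
  set Cp : ↥S → MvPolynomial {p : Fin (n - 1) × Fin (n - 1) // p.2 ≤ p.1} ℚ := fun μ => C (r (μ : Fin (n - 1))) with hCpdef
  set Q : MvPolynomial {p : Fin (n - 1) × Fin (n - 1) // p.2 ≤ p.1} ℚ :=
    (∑ i : ↥S, (Pᵀ.updateCol i Cp).det) - Pᵀ.det with hQdef
  have hmapP : Pᵀ.map (aeval α) = Mᵀ := by
    ext μ i
    simp only [Matrix.map_apply, Matrix.transpose_apply, hPdef, Matrix.of_apply, hMdef]
    rw [ha]
    split
    · rw [aeval_X]
    · rw [map_zero]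
  have hmapC : (fun j => aeval α (Cp j)) = q := by
    funext μ
    rw [hCpdef, hqdef]
    simp only [aeval_C]
    rw [eq_ratCast, ← hr]
  have hQ0 : aeval α Q = 0 := by
    rw [hQdef, map_sub, map_sum]
    have h1 : ∀ i : ↥S, aeval α (Pᵀ.updateCol i Cp).det = (Mᵀ.updateCol i q).det := by
      intro i
      rw [AlgHom.map_det, AlgHom.mapMatrix_apply, Matrix.map_updateCol, hmapP]
      exact congrArg (fun c => (Mᵀ.updateCol i c).det) hmapC
    have h2 : aeval α Pᵀ.det = Mᵀ.det := by
      rw [AlgHom.map_det, AlgHom.mapMatrix_apply, hmapP]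
    rw [h2]
    rw [Finset.sum_congr rfl (fun i _ => h1 i), hdet, sub_self]
  have hQzero : Q = 0 := hα (by rw [hQ0, map_zero])
  -- derive a contradiction: the coefficient of the diagonal monomial in Q is -1
  set v : ↥S → {p : Fin (n - 1) × Fin (n - 1) // p.2 ≤ p.1} := fun i => ⟨((i : Fin (n - 1)), (i : Fin (n - 1))), le_refl _⟩ with hvdef
  set mex : {p : Fin (n - 1) × Fin (n - 1) // p.2 ≤ p.1} →₀ ℕ := ∑ i : ↥S, Finsupp.single (v i) 1 with hmex
  set k : ℕ := Fintype.card ↥S with hk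
  have hkpos : 1 ≤ k := Fintype.card_pos_iff.mpr (Finset.Nonempty.coe_sort hSne)
  have hmexsum : ∑ j ∈ mex.support, mex j = k := by
    have h0 : ∑ j ∈ mex.support, mex j = mex.sum (fun _ e => e) := rfl
    rw [h0, hmex, ← Finsupp.sum_finset_sum_index (fun _ => rfl) (fun _ _ _ => rfl)]
    simp [Finsupp.sum_single_index, hk]
  -- coefficient of mex in Pᵀ.det is 1
  have hPdet2 : Pᵀ.det = monomial mex (1 : ℚ) := by
    rw [Matrix.det_transpose]
    have htri : P.BlockTriangular OrderDual.toDual := by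
      intro i j hij
      have hij' : (i : Fin (n - 1)) < (j : Fin (n - 1)) := hij
      rw [hPdef]
      simp only [Matrix.of_apply]
      rw [dif_neg (not_le.mpr hij')]
    rw [Matrix.det_of_lowerTriangular P htri]
    have : ∀ i : ↥S, P i i = X (v i) := by
      intro i
      rw [hPdef]
      simp only [Matrix.of_apply]
      rw [dif_pos (le_refl _)]
    rw [Finset.prod_congr rfl (fun i _ => this i), hmex]
    exact prod_X_eq_monomial' _ _
  -- coefficient of mex in each cramer determinant is 0 (degree too small)
  have hdeg : ∀ i : ↥S, (Pᵀ.updateCol i Cp).det.totalDegree < k := by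
    intro i
    have hbound : (Pᵀ.updateCol i Cp).det.totalDegree ≤ k - 1 := by
      rw [Matrix.det_apply']
      refine (totalDegree_finset_sum _ _).trans (Finset.sup_le ?_)
      intro τ _
      refine le_trans (totalDegree_mul _ _) ?_
      have hε : ((((Equiv.Perm.sign τ : ℤ)) : MvPolynomial {p : Fin (n - 1) × Fin (n - 1) // p.2 ≤ p.1} ℚ)).totalDegree = 0 := by
        rw [show (((Equiv.Perm.sign τ : ℤ)) : MvPolynomial {p : Fin (n - 1) × Fin (n - 1) // p.2 ≤ p.1} ℚ)
            = C (((Equiv.Perm.sign τ : ℤ) : ℚ)) from (map_intCast (C : ℚ →+* _) _).symm]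
        exact totalDegree_C _
      rw [hε, zero_add]
      refine le_trans (totalDegree_finset_prod _ _) ?_
      have hterm : ∀ j : ↥S,
          ((Pᵀ.updateCol i Cp) (τ j) j).totalDegree ≤ if j = i then 0 else 1 := by
        intro j
        rw [Matrix.updateCol_apply]
        split
        · rw [hCpdef]; exact le_of_eq (totalDegree_C _)
        · rw [Matrix.transpose_apply, hPdef]
          simp only [Matrix.of_apply]
          split
          · exact le_of_eq (totalDegree_X _)
          · rw [totalDegree_zero]; exact Nat.zero_le _
      refine le_trans (Finset.sum_le_sum (fun j _ => hterm j)) ?_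
      have hsplit : ∑ j : ↥S, (if j = i then 0 else 1)
          = (if i = i then 0 else 1) + ∑ j ∈ Finset.univ.erase i, (if j = i then 0 else 1) :=
        (Finset.add_sum_erase _ _ (Finset.mem_univ i)).symm
      rw [hsplit, if_pos rfl, zero_add]
      have : ∑ j ∈ Finset.univ.erase i, (if j = i then (0 : ℕ) else 1)
          = ∑ j ∈ Finset.univ.erase i, 1 := by
        refine Finset.sum_congr rfl (fun j hj => ?_)
        rw [if_neg (Finset.ne_of_mem_erase hj)]
      rw [this, Finset.sum_const, smul_eq_mul, mul_one,
        Finset.card_erase_of_mem (Finset.mem_univ i), Finset.card_univ]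
    exact lt_of_le_of_lt hbound (Nat.sub_lt_of_pos_le Nat.one_pos hkpos)
  have hcoeff : coeff mex Q = -1 := by
    rw [hQdef, coeff_sub, coeff_sum]
    have h1 : ∀ i : ↥S, coeff mex (Pᵀ.updateCol i Cp).det = 0 := by
      intro i
      apply coeff_eq_zero_of_totalDegree_lt
      rw [hmexsum]
      exact hdeg i
    rw [Finset.sum_congr rfl (fun i _ => h1 i), Finset.sum_const_zero, hPdet2,
      coeff_monomial, if_pos rfl]
    ring
  rw [hQzero, coeff_zero] at hcoeff
  exact absurd hcoeff.symm (by norm_num)
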